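/- Let f : [0,1] → ℝ be continuously differentiable, monotonically nondecreasing and convex on [0,1], with ∫₀¹ (t − 2/3)·f(t) dt = 0. Then for every x ∈ [0, 1/3), the quantity q(2x) = f(2x) − (2/(1−3x)²)·∫₀^x (1−3t)·( f(1−t) − 4·f(2t) ) dt is nonnegative. -/

import Mathlib

open Set intervalIntegral

/-- For a continuously differentiable, nondecreasing and convex `f : [0,1] → ℝ` with
`∫₀¹ (t − 2/3) f(t) dt = 0`, the quantity
`q(2x) = f(2x) − (2/(1−3x)²)·∫₀^x (1−3t)(f(1−t) − 4f(2t)) dt`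
is nonnegative for all `x ∈ [0, 1/3)`. -/
theorem q_nonneg (f f' : ℝ → ℝ)
    (hderiv : ∀ x ∈ Set.Icc (0 : ℝ) 1, HasDerivWithinAt f (f' x) (Set.Icc (0 : ℝ) 1) x)
    (hf'cont : ContinuousOn f' (Set.Icc (0 : ℝ) 1))
    (hmono : MonotoneOn f (Set.Icc (0 : ℝ) 1))
    (hconv : ConvexOn ℝ (Set.Icc (0 : ℝ) 1) f)
    (hint : (∫ t in (0 : ℝ)..1, (t - 2/3) * f t) = 0) :
    ∀ x ∈ Set.Ico (0 : ℝ) (1/3),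
      0 ≤ f (2*x) - (2 / (1 - 3*x)^2) *
        ∫ t in (0 : ℝ)..x, (1 - 3*t) * (f (1 - t) - 4 * f (2*t)) := by
  have hfc : ContinuousOn f (Set.Icc (0 : ℝ) 1) :=
    fun x hx => (hderiv x hx).continuousWithinAt
  set φ : ℝ → ℝ := fun t => (1 - 3*t) * (f (1 - t) - 4 * f (2*t)) with hφdef
  -- φ is continuous on [0, 1/2]
  have hφc : ContinuousOn φ (Set.Icc (0 : ℝ) (1/2)) := by
    apply ContinuousOn.mul (by fun_prop)
    apply ContinuousOn.sub
    · refine hfc.comp (by fun_prop) ?_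
      intro t ht; exact ⟨by linarith [ht.2], by linarith [ht.1]⟩
    · refine ContinuousOn.mul continuousOn_const (hfc.comp (by fun_prop) ?_)
      intro t ht; exact ⟨by linarith [ht.1], by linarith [ht.2]⟩
  have hφint : MeasureTheory.IntegrableOn φ (Set.Icc (0:ℝ) (1/3)) := by
    apply ContinuousOn.integrableOn_Icc
    exact hφc.mono (Icc_subset_Icc le_rfl (by norm_num))
  set H : ℝ → ℝ := fun x => (1 - 3*x)^2 * f (2*x) - 2 * ∫ t in (0:ℝ)..x, φ t with hHdef
  -- H is continuous on [0, 1/3]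
  have hHc : ContinuousOn H (Set.Icc (0:ℝ) (1/3)) := by
    apply ContinuousOn.sub
    · apply ContinuousOn.mul (by fun_prop)
      refine hfc.comp (by fun_prop) ?_
      intro t ht; exact ⟨by linarith [ht.1], by linarith [ht.2]⟩
    · apply ContinuousOn.mul continuousOn_const
      have := continuousOn_primitive_interval (a := (0:ℝ)) (b := (1/3:ℝ))
        (μ := MeasureTheory.volume) (f := φ) (by rwa [uIcc_of_le (by norm_num)])
      rwa [uIcc_of_le (by norm_num)] at this
  -- derivative of H on the interior
  have hHd : ∀ x ∈ Set.Ioo (0:ℝ) (1/3),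
      HasDerivAt H (2*(1-3*x)^1*(-3) * f (2*x) + (1-3*x)^2 * (f' (2*x) * 2) - 2 * φ x) x := by
    intro x hx
    have h2x : (2*x) ∈ Set.Icc (0:ℝ) 1 := ⟨by linarith [hx.1], by linarith [hx.2]⟩
    have hf2 : HasDerivAt f (f' (2*x)) (2*x) := by
      refine (hderiv _ h2x).hasDerivAt (Icc_mem_nhds ?_ ?_) <;> [linarith [hx.1]; linarith [hx.2]]
    have hl : HasDerivAt (fun y : ℝ => 2*y) (2:ℝ) x := by
      simpa using (hasDerivAt_id x).const_mul (2:ℝ)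
    have hcomp : HasDerivAt (fun y => f (2*y)) (f' (2*x) * 2) x := hf2.comp x hl
    have h1 : HasDerivAt (fun y : ℝ => 1 - 3*y) (-3) x := by
      simpa using (hasDerivAt_const x (1:ℝ)).fun_sub ((hasDerivAt_id x).const_mul (3:ℝ))
    have hsq : HasDerivAt (fun y : ℝ => (1 - 3*y)^2) (2*(1-3*x)^1*(-3)) x := by
      simpa using h1.fun_pow 2
    have hintd : HasDerivAt (fun u => ∫ t in (0:ℝ)..u, φ t) (φ x) x := by
      have hca : ContinuousAt φ x :=
        hφc.continuousAt (Icc_mem_nhds hx.1 (by linarith [hx.2]))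
      apply integral_hasDerivAt_right
      · apply ContinuousOn.intervalIntegrable
        rw [uIcc_of_le hx.1.le]
        exact hφc.mono (Icc_subset_Icc le_rfl (by linarith [hx.2]))
      · exact ContinuousOn.stronglyMeasurableAtFilter (s := Ioo (0:ℝ) (1/2)) isOpen_Ioo
          (hφc.mono Ioo_subset_Icc_self) x ⟨hx.1, by linarith [hx.2]⟩
      · exact hca
    exact (hsq.mul hcomp).sub (hintd.const_mul 2)
  -- H is antitone on [0, 1/3]
  have hH_anti : AntitoneOn H (Set.Icc (0:ℝ) (1/3)) := by
    apply antitoneOn_of_deriv_nonpos (convex_Icc _ _) hHc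
    · rw [interior_Icc]
      intro x hx
      exact ((hHd x hx).differentiableAt).differentiableWithinAt
    · rw [interior_Icc]
      intro x hx
      rw [(hHd x hx).deriv]
      have h2x : (2*x) ∈ Set.Icc (0:ℝ) 1 := ⟨by linarith [hx.1], by linarith [hx.2]⟩
      have h1x : (1-x) ∈ Set.Icc (0:ℝ) 1 := ⟨by linarith [hx.2], by linarith [hx.1]⟩
      have hf2 : HasDerivAt f (f' (2*x)) (2*x) := by
        refine (hderiv _ h2x).hasDerivAt (Icc_mem_nhds ?_ ?_) <;> [linarith [hx.1]; linarith [hx.2]]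
      have hlt : 2*x < 1-x := by linarith [hx.2]
      have hslope := hconv.le_slope_of_hasDerivAt h2x h1x hlt hf2
      rw [slope_def_field] at hslope
      have hpos : (0:ℝ) < (1-x) - 2*x := by linarith
      rw [le_div_iff₀ hpos] at hslope
      have hφx : φ x = (1 - 3*x) * (f (1 - x) - 4 * f (2*x)) := rfl
      rw [hφx]
      nlinarith [hx.1, hx.2, sq_nonneg (1-3*x)]
  -- the integral up to 1/3 vanishes
  have hg : (∫ t in (0:ℝ)..(1/3:ℝ), φ t) = 0 := by
    have hAc : ContinuousOn (fun t : ℝ => (t - 2/3) * f t) (Set.Icc (0:ℝ) 1) := by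
      exact ContinuousOn.mul (by fun_prop) hfc
    have hsplit : (∫ t in (0:ℝ)..(1/3:ℝ), φ t)
        = (∫ t in (0:ℝ)..(1/3:ℝ), 3 * ((1-t - 2/3) * f (1-t)))
          + ∫ t in (0:ℝ)..(1/3:ℝ), 6 * ((2*t - 2/3) * f (2*t)) := by
      rw [← intervalIntegral.integral_add]
      · apply intervalIntegral.integral_congr
        intro t ht
        simp only [hφdef]
        ring
      · apply ContinuousOn.intervalIntegrable
        rw [uIcc_of_le (by norm_num)]
        apply ContinuousOn.mul continuousOn_const
        apply ContinuousOn.mul (by fun_prop)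
        exact hfc.comp (by fun_prop)
          (fun t ht => ⟨by linarith [ht.2], by linarith [ht.1]⟩)
      · apply ContinuousOn.intervalIntegrable
        rw [uIcc_of_le (by norm_num)]
        apply ContinuousOn.mul continuousOn_const
        apply ContinuousOn.mul (by fun_prop)
        exact hfc.comp (by fun_prop)
          (fun t ht => ⟨by linarith [ht.1], by linarith [ht.2]⟩)
    have e1 : (∫ t in (0:ℝ)..(1/3:ℝ), 3 * ((1-t - 2/3) * f (1-t)))
        = 3 * ∫ t in (2/3:ℝ)..(1:ℝ), (t - 2/3) * f t := by
      rw [intervalIntegral.integral_const_mul]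
      congr 1
      have := intervalIntegral.integral_comp_sub_left
        (a := (0:ℝ)) (b := (1/3:ℝ)) (fun t => (t - 2/3) * f t) 1
      norm_num at this ⊢
      convert this using 2
    have e2 : (∫ t in (0:ℝ)..(1/3:ℝ), 6 * ((2*t - 2/3) * f (2*t)))
        = 3 * ∫ t in (0:ℝ)..(2/3:ℝ), (t - 2/3) * f t := by
      rw [intervalIntegral.integral_const_mul]
      have := intervalIntegral.integral_comp_mul_left
        (a := (0:ℝ)) (b := (1/3:ℝ)) (fun t => (t - 2/3) * f t) (c := 2) (by norm_num)
      norm_num at this ⊢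
      rw [this]; ring
    have hadd : (∫ t in (0:ℝ)..(2/3:ℝ), (t - 2/3) * f t)
        + (∫ t in (2/3:ℝ)..(1:ℝ), (t - 2/3) * f t) = 0 := by
      rw [intervalIntegral.integral_add_adjacent_intervals, hint]
      · apply ContinuousOn.intervalIntegrable
        rw [uIcc_of_le (by norm_num)]
        exact hAc.mono (Icc_subset_Icc le_rfl (by norm_num))
      · apply ContinuousOn.intervalIntegrable
        rw [uIcc_of_le (by norm_num)]
        exact hAc.mono (Icc_subset_Icc (by norm_num) le_rfl)
    rw [hsplit, e1, e2]; linarith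
  -- conclusion
  intro x hx
  have hx13 : x ≤ (1/3:ℝ) := hx.2.le
  have hmem : x ∈ Set.Icc (0:ℝ) (1/3) := ⟨hx.1, hx13⟩
  have hmem' : (1/3:ℝ) ∈ Set.Icc (0:ℝ) (1/3) := ⟨by norm_num, le_rfl⟩
  have hH13 : H (1/3:ℝ) = 0 := by
    simp only [hHdef, hg]; norm_num
  have hHx : 0 ≤ H x := by
    have := hH_anti hmem hmem' hx13
    rw [hH13] at this; exact this
  have hp : (0:ℝ) < (1 - 3*x)^2 := by
    have : 1 - 3*x > 0 := by linarith [hx.2]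
    positivity
  rw [sub_nonneg, div_mul_eq_mul_div, div_le_iff₀ hp]
  simp only [hHdef, sub_nonneg] at hHx
  linarith [hHx]
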